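/- Let d be a positive integer and μ, σ, γ > 0. If 0 < ε < μ and n is a real number with n > (σ²/(2με))·log((μ+ε)/(μ−ε)), then r_rob(n, ε) > r_std(n); that is, d·γ·σ·√(2/(nπ))·(exp(−n(ε+μ)²/(2σ²)) + exp(−n(ε−μ)²/(2σ²)) − exp(−nμ²/(2σ²))) > d·γ·σ·√(2/(nπ))·exp(−nμ²/(2σ²)). -/

import Mathlib

open Real Set

/-- Convexity of `t ↦ log(μ+t) − log(μ−t)` on `[0, ε]` for `0 < ε < μ`. -/
lemma logratio_convex {μ ε : ℝ} (hμ : 0 < μ) (hε0 : 0 < ε) (hεμ : ε < μ) :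
    ConvexOn ℝ (Icc (0:ℝ) ε) (fun t => Real.log (μ + t) - Real.log (μ - t)) := by
  apply convexOn_of_hasDerivWithinAt2_nonneg (f' := fun t => (μ+t)⁻¹ + (μ-t)⁻¹)
    (f'' := fun t => ((μ-t)^2)⁻¹ - ((μ+t)^2)⁻¹) (convex_Icc 0 ε)
  · apply ContinuousOn.sub
    · exact (continuousOn_const.add continuousOn_id).log
        (fun x hx => ne_of_gt (by show (0:ℝ) < μ + x; nlinarith [hx.1, hx.2]))
    · exact (continuousOn_const.sub continuousOn_id).log
        (fun x hx => ne_of_gt (by show (0:ℝ) < μ - x; nlinarith [hx.1, hx.2]))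
  · intro x hx
    rw [interior_Icc] at hx
    have h1 : 0 < μ + x := by linarith [hx.1]
    have h2 : 0 < μ - x := by linarith [hx.2, hx.1]
    apply HasDerivAt.hasDerivWithinAt
    have d1 : HasDerivAt (fun t => Real.log (μ + t)) (1/(μ+x)) x := by
      have := (((hasDerivAt_id x).const_add μ)).log h1.ne'
      simpa using this
    have d2 : HasDerivAt (fun t => Real.log (μ - t)) (-1/(μ-x)) x := by
      have h : HasDerivAt (fun t : ℝ => μ - t) (-1) x := by
        simpa using ((hasDerivAt_id x).const_sub μ)
      have := h.log h2.ne'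
      simpa using this
    have := d1.sub d2
    convert this using 1
    · rfl
    · ring
  · intro x hx
    rw [interior_Icc] at hx
    have h1 : 0 < μ + x := by linarith [hx.1]
    have h2 : 0 < μ - x := by linarith [hx.2, hx.1]
    apply HasDerivAt.hasDerivWithinAt
    have d1 : HasDerivAt (fun t : ℝ => (μ+t)⁻¹) (-1/(μ+x)^2) x := by
      have := ((hasDerivAt_id x).const_add μ).inv h1.ne'
      simpa [Pi.inv_def] using this
    have d2 : HasDerivAt (fun t : ℝ => (μ-t)⁻¹) (1/(μ-x)^2) x := by
      have h : HasDerivAt (fun t : ℝ => μ - t) (-1) x := by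
        simpa using ((hasDerivAt_id x).const_sub μ)
      have := h.inv h2.ne'
      simpa [Pi.inv_def] using this
    have := d1.add d2
    convert this using 1
    · rfl
    · ring
  · intro x hx
    rw [interior_Icc] at hx
    have h1 : 0 < μ + x := by linarith [hx.1]
    have h2 : 0 < μ - x := by linarith [hx.2, hx.1]
    have hle : (μ - x)^2 ≤ (μ + x)^2 := by nlinarith [hx.1]
    have := one_div_le_one_div_of_le (by positivity) hle
    simp only [one_div] at this
    linarith

/-- If `0 < ε < μ` and `n > (σ²/(2με))·log((μ+ε)/(μ−ε))`, then `r_rob(n, ε) > r_std(n)`. -/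
theorem r_rob_gt_r_std (d : ℕ) (hd : 0 < d) (μ σ γ ε : ℝ)
    (hμ : 0 < μ) (hσ : 0 < σ) (hγ : 0 < γ) (hε0 : 0 < ε) (hεμ : ε < μ)
    (n : ℝ) (hn : n > σ ^ 2 / (2 * μ * ε) * Real.log ((μ + ε) / (μ - ε))) :
    d * γ * σ * Real.sqrt (2 / (n * Real.pi)) *
        (Real.exp (-(n * (ε + μ) ^ 2) / (2 * σ ^ 2)) +
          Real.exp (-(n * (ε - μ) ^ 2) / (2 * σ ^ 2)) -
          Real.exp (-(n * μ ^ 2) / (2 * σ ^ 2)))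
      > d * γ * σ * Real.sqrt (2 / (n * Real.pi)) * Real.exp (-(n * μ ^ 2) / (2 * σ ^ 2)) := by
  have hμε : 0 < μ - ε := by linarith
  have hμε' : 0 < μ + ε := by linarith
  have hlogpos : 0 < Real.log ((μ + ε) / (μ - ε)) := by
    apply Real.log_pos
    rw [lt_div_iff₀ hμε]; linarith
  have hn0 : 0 < n := lt_trans (by positivity) hn
  -- key inequality at ε
  have hkeyε : Real.log (μ + ε) - Real.log (μ - ε) < 2 * n * μ * ε / σ ^ 2 := by
    rw [← Real.log_div hμε'.ne' hμε.ne']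
    rw [gt_iff_lt, div_mul_eq_mul_div, div_lt_iff₀ (by positivity)] at hn
    rw [lt_div_iff₀ (by positivity : (0:ℝ) < σ ^ 2)]
    nlinarith
  set G : ℝ → ℝ := fun t =>
    Real.exp (-(n * (t + μ) ^ 2) / (2 * σ ^ 2)) + Real.exp (-(n * (t - μ) ^ 2) / (2 * σ ^ 2))
    with hG
  have hmono : StrictMonoOn G (Icc 0 ε) := by
    apply strictMonoOn_of_deriv_pos (convex_Icc 0 ε)
    · fun_prop
    · intro t ht
      rw [interior_Icc] at ht
      have h1 : 0 < μ + t := by linarith [ht.1]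
      have h2 : 0 < μ - t := by linarith [ht.2]
      -- pointwise log inequality at t via convexity
      have hlt : Real.log (μ + t) - Real.log (μ - t) < 2 * n * μ * t / σ ^ 2 := by
        have hconv := logratio_convex hμ hε0 hεμ
        have ha : (0:ℝ) ≤ 1 - t / ε := by
          rw [sub_nonneg, div_le_one hε0]; exact le_of_lt ht.2
        have hb : (0:ℝ) ≤ t / ε := (div_pos ht.1 hε0).le
        have hc := hconv.2 (left_mem_Icc.mpr (le_of_lt hε0)) (right_mem_Icc.mpr (le_of_lt hε0))
          ha hb (by ring)
        have hx : (1 - t / ε) • (0:ℝ) + (t / ε) • ε = t := by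
          simp only [smul_eq_mul, mul_zero, zero_add]; exact div_mul_cancel₀ t hε0.ne'
        rw [hx] at hc
        simp only [smul_eq_mul, add_zero, sub_zero, sub_self, mul_zero, zero_add] at hc
        calc Real.log (μ + t) - Real.log (μ - t)
            ≤ t/ε * (Real.log (μ + ε) - Real.log (μ - ε)) := hc
          _ < t/ε * (2 * n * μ * ε / σ ^ 2) := by
              apply mul_lt_mul_of_pos_left hkeyε (div_pos ht.1 hε0)
          _ = 2 * n * μ * t / σ ^ 2 := by field_simp
      -- derivative of G
      set A : ℝ := -(n * (t + μ) ^ 2) / (2 * σ ^ 2) with hA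
      set B : ℝ := -(n * (t - μ) ^ 2) / (2 * σ ^ 2) with hB
      have e1 : HasDerivAt (fun s : ℝ => -(n * (s + μ) ^ 2) / (2 * σ ^ 2))
          (-(n * (2 * (t + μ))) / (2 * σ ^ 2)) t := by
        have h : HasDerivAt (fun s : ℝ => (s + μ) ^ 2) (2 * (t + μ)) t := by
          simpa [Pi.pow_def] using ((hasDerivAt_id t).add_const μ).pow 2
        have := (h.const_mul n).neg.div_const (2 * σ ^ 2)
        exact this
      have e2 : HasDerivAt (fun s : ℝ => -(n * (s - μ) ^ 2) / (2 * σ ^ 2))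
          (-(n * (2 * (t - μ))) / (2 * σ ^ 2)) t := by
        have h : HasDerivAt (fun s : ℝ => (s - μ) ^ 2) (2 * (t - μ)) t := by
          simpa [Pi.pow_def] using ((hasDerivAt_id t).sub_const μ).pow 2
        have := (h.const_mul n).neg.div_const (2 * σ ^ 2)
        exact this
      have hd1 : HasDerivAt G
          (Real.exp A * (-(n * (2 * (t + μ))) / (2 * σ ^ 2))
            + Real.exp B * (-(n * (2 * (t - μ))) / (2 * σ ^ 2))) t := by
        exact (e1.exp).add (e2.exp)
      rw [hd1.deriv]
      -- positivity of the derivative value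
      have hBA : B - A = 2 * n * μ * t / σ ^ 2 := by
        rw [hA, hB]; field_simp; ring
      have hratio : (μ + t) / (μ - t) < Real.exp B / Real.exp A := by
        rw [← Real.exp_sub, hBA]
        have hlt' : Real.log ((μ + t) / (μ - t)) < 2 * n * μ * t / σ ^ 2 := by
          rw [Real.log_div h1.ne' h2.ne']; exact hlt
        have := Real.exp_lt_exp.mpr hlt'
        rwa [Real.exp_log (by positivity)] at this
      have hmain : (μ + t) * Real.exp A < (μ - t) * Real.exp B := by
        rw [div_lt_div_iff₀ h2 (Real.exp_pos A)] at hratio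
        linarith
      have hrw : Real.exp A * (-(n * (2 * (t + μ))) / (2 * σ ^ 2))
            + Real.exp B * (-(n * (2 * (t - μ))) / (2 * σ ^ 2))
          = n / σ ^ 2 * ((μ - t) * Real.exp B - (μ + t) * Real.exp A) := by
        field_simp
        ring
      rw [hrw]
      have : 0 < n / σ ^ 2 := by positivity
      nlinarith
  have hfin : G 0 < G ε := hmono (left_mem_Icc.mpr (le_of_lt hε0))
    (right_mem_Icc.mpr (le_of_lt hε0)) hε0
  have hG0 : G 0 = 2 * Real.exp (-(n * μ ^ 2) / (2 * σ ^ 2)) := by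
    rw [hG]
    norm_num
    ring
  rw [hG0, hG] at hfin
  have ha : 0 < (d : ℝ) * γ * σ * Real.sqrt (2 / (n * Real.pi)) := by
    have : (0:ℝ) < d := Nat.cast_pos.mpr hd
    have hsq : 0 < Real.sqrt (2 / (n * Real.pi)) :=
      Real.sqrt_pos.mpr (by positivity)
    positivity
  apply mul_lt_mul_of_pos_left _ ha
  simp only at hfin
  linarith
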